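/- Let p be a prime with p ≡ 1 mod 4, let k be a field of characteristic p, let a ∈ k with a ≠ 0, and let g : ℤ → k satisfy g_s = 0 for all s ∉ {1, 2, 4} and a^p·g₄ = −g₂. Then there exists v : ℤ → k with v_s = 0 for all s < 0 and v_s = 0 for all s > (p+7)/2, such that for every integer s ≥ 1 one has (2s − 3)·a^p·v_{s−1} = (9 − 2s)·v_{s−3} + 2·g_s (integer coefficients interpreted in k). -/

import Mathlib

/-- The even-index chain: `chainW A c N 0 = c` and each step divides by `(4m-1)·A`
until index `N`, after which everything is zero. -/
noncomputable def chainW {K : Type*} [Field K] (A c : K) (N : ℕ) : ℕ → K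
  | 0 => c
  | (m + 1) =>
      if m + 1 ≤ N then
        ((7 - 4 * ((m : ℤ) + 1) : ℤ) : K) / (((4 * ((m : ℤ) + 1) - 1 : ℤ) : K) * A)
          * chainW A c N m
      else 0

theorem chainW_zero {K : Type*} [Field K] (A c : K) (N : ℕ) (m : ℕ) (h : N < m) :
    chainW A c N m = 0 := by
  cases m with
  | zero => omega
  | succ mm => simp [chainW, Nat.not_le.mpr h, show ¬ (mm + 1 ≤ N) by omega]

theorem finitely_supported_solution_j_1728
    (p : ℕ) (hp : p.Prime) (hp4 : p % 4 = 1)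
    (k : Type*) [Field k] [CharP k p] (a : k) (ha : a ≠ 0)
    (g : ℤ → k) (hgsupp : ∀ s : ℤ, s ≠ 1 → s ≠ 2 → s ≠ 4 → g s = 0)
    (hgcomp : a ^ p * g 4 = -g 2) :
    ∃ v : ℤ → k,
      (∀ s : ℤ, s < 0 → v s = 0) ∧
      (∀ s : ℤ, (((p + 7) / 2 : ℕ) : ℤ) < s → v s = 0) ∧
      ∀ s : ℤ, 1 ≤ s →
        ((2 * s - 3 : ℤ) : k) * a ^ p * v (s - 1) =
          ((9 - 2 * s : ℤ) : k) * v (s - 3) + 2 * g s := by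
  classical
  have hp2 := hp.two_le
  have hp5 : 5 ≤ p := by omega
  set N : ℕ := (p + 3) / 4 with hN
  have h4N : 4 * N = p + 3 := by omega
  set A : k := a ^ p with hA
  have hAne : A ≠ 0 := pow_ne_zero _ ha
  set c : k := -2 * g 1 / A with hc
  set w : ℕ → k := chainW A c N with hw
  have hWz : ∀ m : ℕ, N < m → w m = 0 := fun m h => chainW_zero A c N m h
  -- coefficient nonvanishing
  have hcoef : ∀ m : ℕ, 1 ≤ m → m ≤ N → ((4 * (m : ℤ) - 1 : ℤ) : k) ≠ 0 := by
    intro m h1 h2 h0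
    rw [CharP.intCast_eq_zero_iff k p] at h0
    have hple : (p : ℤ) ≤ 4 * (m : ℤ) - 1 := Int.le_of_dvd (by omega) h0
    by_cases heq : 4 * (m : ℤ) - 1 = (p : ℤ)
    · omega
    · have hd2 : (p : ℤ) ∣ (4 * (m : ℤ) - 1 - p) := (dvd_sub h0 dvd_rfl)
      have := Int.le_of_dvd (by omega) hd2
      omega
  set v : ℤ → k := fun s =>
    if s = 1 then -2 * g 4 else if 2 ∣ s ∧ 0 ≤ s then w (s.toNat / 2) else 0 with hv
  have hvneg : ∀ s : ℤ, s < 0 → v s = 0 := by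
    intro s hs
    simp only [hv]
    rw [if_neg (by omega), if_neg (by rintro ⟨-, h⟩; omega)]
  have hvodd0 : ∀ s : ℤ, s ≠ 1 → ¬ (2 ∣ s) → v s = 0 := by
    intro s h1 h2
    simp only [hv]
    rw [if_neg h1, if_neg (by rintro ⟨h, -⟩; exact h2 h)]
  have hveven : ∀ m : ℕ, v (2 * (m : ℤ)) = w m := by
    intro m
    simp only [hv]
    rw [if_neg (by omega), if_pos ⟨⟨(m : ℤ), by ring⟩, by positivity⟩]
    congr 1
    omega
  have hv1 : v 1 = -2 * g 4 := by simp [hv]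
  refine ⟨v, hvneg, ?_, ?_⟩
  · -- support bound
    intro s hs
    have hs' : ((p + 7) / 2 : ℕ) < s := hs
    by_cases h1 : s = 1
    · omega
    by_cases h2 : (2 ∣ s ∧ 0 ≤ s)
    · simp only [hv]
      rw [if_neg h1, if_pos h2]
      apply hWz
      obtain ⟨⟨t, ht⟩, hpos⟩ := h2
      omega
    · simp only [hv]; rw [if_neg h1, if_neg h2]
  · -- the recurrence
    intro s hs1
    obtain ⟨n, rfl⟩ : ∃ n : ℕ, s = (n : ℤ) := ⟨s.toNat, by omega⟩
    have hn1 : 1 ≤ n := by exact_mod_cast hs1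
    rcases Nat.even_or_odd n with ⟨m, hm⟩ | ⟨m, hm⟩
    · -- n even, n = m + m
      subst hm
      rcases m with _ | _ | _ | mm
      · omega
      · -- s = 2
        have e1 : ((1 + 1 : ℕ) : ℤ) - 1 = 1 := by norm_num
        have e3 : ((1 + 1 : ℕ) : ℤ) - 3 = -1 := by norm_num
        rw [e1, e3, hv1, hvodd0 (-1) (by norm_num) (by decide)]
        push_cast
        ring_nf
        linear_combination (-2 : k) * hgcomp
      · -- s = 4
        have e1 : ((2 + 2 : ℕ) : ℤ) - 1 = 3 := by norm_num
        have e3 : ((2 + 2 : ℕ) : ℤ) - 3 = 1 := by norm_num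
        rw [e1, e3, hv1, hvodd0 3 (by norm_num) (by decide)]
        have hg4 : ((2 + 2 : ℕ) : ℤ) = 4 := by norm_num
        rw [hg4]
        push_cast
        ring
      · -- s = 2m ≥ 6
        set m : ℕ := mm + 1 + 1 + 1 with hmdef
        have hsval : ((m + m : ℕ) : ℤ) = 2 * (m : ℤ) := by push_cast; ring
        have hgz : g ((m + m : ℕ) : ℤ) = 0 := by
          apply hgsupp <;> omega
        have hv1' : v (((m + m : ℕ) : ℤ) - 1) = 0 := by
          apply hvodd0
          · omega
          · rw [hsval]; rintro ⟨t, ht⟩; omega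
        have hv3' : v (((m + m : ℕ) : ℤ) - 3) = 0 := by
          apply hvodd0
          · omega
          · rw [hsval]; rintro ⟨t, ht⟩; omega
        rw [hv1', hv3', hgz]
        ring
    · -- n odd, n = 2m + 1
      subst hm
      have e1 : ((2 * m + 1 : ℕ) : ℤ) - 1 = 2 * (m : ℤ) := by push_cast; ring
      rcases m with _ | mm
      · -- s = 1
        have e1' : ((2 * 0 + 1 : ℕ) : ℤ) - 1 = 2 * ((0 : ℕ) : ℤ) := e1
        rw [e1', hveven 0, hvneg _ (by norm_num)]
        have hw0 : w 0 = c := rfl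
        rw [hw0, hc]
        push_cast
        field_simp
        ring
      · -- s = 2m+1, m = mm+1 ≥ 1
        set m : ℕ := mm + 1 with hmdef
        have hgz : g ((2 * m + 1 : ℕ) : ℤ) = 0 := by
          apply hgsupp <;> omega
        have e3 : ((2 * m + 1 : ℕ) : ℤ) - 3 = 2 * ((mm : ℕ) : ℤ) := by push_cast; omega
        rw [e1, e3, hveven m, hveven mm, hgz]
        by_cases hmN : m ≤ N
        · -- recursion step
          have hstep : w m = ((7 - 4 * ((mm : ℤ) + 1) : ℤ) : k)
              / (((4 * ((mm : ℤ) + 1) - 1 : ℤ) : k) * A) * w mm := by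
            simp only [hw, hmdef, chainW, if_pos hmN]
            rw [if_pos (show mm + 1 ≤ N from hmN)]
          have hC : ((4 * (m : ℤ) - 1 : ℤ) : k) ≠ 0 := hcoef m (by omega) hmN
          have hC' : (4 * ((mm : k) + 1) - 1) ≠ 0 := by
            intro h0
            apply hC
            push_cast [hmdef]
            linear_combination h0
          rw [hstep]
          push_cast [hmdef]
          have key : ((7 - 4 * ((mm:k) + 1)) / ((4 * ((mm:k) + 1) - 1) * A)) * ((4 * ((mm:k) + 1) - 1) * A) = 7 - 4 * ((mm:k) + 1) := div_mul_cancel₀ _ (mul_ne_zero hC' hAne)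
          linear_combination (w mm) * key
        · -- tail: m ≥ N + 1
          rw [hWz m (by omega)]
          by_cases hmN1 : m = N + 1
          · have hcz : ((9 - 2 * ((2 * m + 1 : ℕ) : ℤ)) : ℤ) = -(p : ℤ) := by
              push_cast; omega
            rw [hcz]
            push_cast
            simp [CharP.cast_eq_zero k p]
          · rw [hWz mm (by omega)]
            ring
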